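/- Manin's cohomological Berezinian is one-dimensional: ω₀ * ω₀ = 0, and for every α ∈ B with ω₀ * α = 0 there exist c ∈ ℝ and β ∈ B with α = c • (e_1 * e_2 * ⋯ * e_n) + ω₀ * β; moreover if c • (e_1 * ⋯ * e_n) = ω₀ * β′ for some β′ ∈ B then c = 0. Hence the cohomology of multiplication by ω₀ on B is a one-dimensional real vector space spanned by the class of e_1⋯e_n (the cohomology H(⋀W*, ω∧) defining Ber(V*) for the odd symplectic superspace W = V ⊕ ΠV* with V purely even of dimension n). -/

import Mathlib

open TensorProduct ExteriorAlgebra MvPolynomial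

set_option synthInstance.maxHeartbeats 1000000
set_option maxHeartbeats 1000000

noncomputable section

/-- The algebraic model `B = ⋀W*` for `W = V ⊕ ΠV*`, `V` purely even of dimension `n`. -/
abbrev Bmodel (n : ℕ) := MvPolynomial (Fin n) ℝ ⊗[ℝ] ExteriorAlgebra ℝ (Fin n → ℝ)

/-- The even generator `y_i` of `B`. -/
def yy (n : ℕ) (i : Fin n) : Bmodel n := X i ⊗ₜ 1

/-- The odd generator `e_i` of `B`. -/
def ee (n : ℕ) (i : Fin n) : Bmodel n := 1 ⊗ₜ ι ℝ (Pi.single i 1)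

/-- The odd symplectic form `ω₀ = ∑ y_i * e_i` of `B`. -/
def om0 (n : ℕ) : Bmodel n := ∑ i : Fin n, yy n i * ee n i

/-- The element `e_1 * e_2 * ⋯ * e_n` of `B`. -/
def eVol (n : ℕ) : Bmodel n := (List.ofFn (ee n)).prod

namespace Ber

variable {n : ℕ}

abbrev Pn (n : ℕ) := MvPolynomial (Fin n) ℝ
abbrev En (n : ℕ) := ExteriorAlgebra ℝ (Fin n → ℝ)

/-- basis vectors of ℝⁿ -/
def vv (n : ℕ) (i : Fin n) : Fin n → ℝ := Pi.single i 1

/-- contraction with i-th coordinate functional -/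
def ct (n : ℕ) (i : Fin n) : En n →ₗ[ℝ] En n :=
  CliffordAlgebra.contractLeft (Q := (0 : QuadraticForm ℝ (Fin n → ℝ))) (LinearMap.proj i)

lemma ct_one (i : Fin n) : ct n i 1 = 0 := CliffordAlgebra.contractLeft_one _ _

lemma ct_ι_mul (i : Fin n) (v : Fin n → ℝ) (x : En n) :
    ct n i (ι ℝ v * x) = v i • x - ι ℝ v * ct n i x := by
  have h := CliffordAlgebra.contractLeft_ι_mul (Q := (0 : QuadraticForm ℝ (Fin n → ℝ)))
    (d := (LinearMap.proj i : Module.Dual ℝ (Fin n → ℝ))) v x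
  exact h

def dOp (n : ℕ) : Bmodel n →ₗ[ℝ] Bmodel n := LinearMap.mulLeft ℝ (om0 n)

def sOp (n : ℕ) : Bmodel n →ₗ[ℝ] Bmodel n :=
  ∑ j : Fin n, TensorProduct.map (pderiv j).toLinearMap (ct n j)

def Euler (n : ℕ) : Pn n →ₗ[ℝ] Pn n :=
  ∑ i : Fin n, LinearMap.mulLeft ℝ (X i) ∘ₗ (pderiv i).toLinearMap

def Kop (n : ℕ) : En n →ₗ[ℝ] En n :=
  ∑ i : Fin n, LinearMap.mulLeft ℝ (ι ℝ (vv n i)) ∘ₗ ct n i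

def Nop (n : ℕ) : Bmodel n →ₗ[ℝ] Bmodel n :=
  n • LinearMap.id + TensorProduct.map (Euler n) LinearMap.id
    - TensorProduct.map LinearMap.id (Kop n)

lemma om0_eq : om0 n = ∑ i : Fin n, (X i : Pn n) ⊗ₜ[ℝ] ι ℝ (vv n i) := by
  unfold om0 yy ee vv
  refine Finset.sum_congr rfl fun i _ => ?_
  rw [Algebra.TensorProduct.tmul_mul_tmul, mul_one, one_mul]
lemma dOp_tmul (f : Pn n) (g : En n) :
    dOp n (f ⊗ₜ[ℝ] g) = ∑ i : Fin n, (X i * f) ⊗ₜ[ℝ] (ι ℝ (vv n i) * g) := by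
  rw [dOp, LinearMap.mulLeft_apply, om0_eq, Finset.sum_mul]
  exact Finset.sum_congr rfl fun i _ => Algebra.TensorProduct.tmul_mul_tmul _ _ _ _

lemma sOp_tmul (f : Pn n) (g : En n) :
    sOp n (f ⊗ₜ[ℝ] g) = ∑ j : Fin n, (pderiv j f) ⊗ₜ[ℝ] (ct n j g) := by
  rw [sOp, LinearMap.sum_apply]
  rfl

lemma ι_anticomm (v w : Fin n → ℝ) : ι ℝ v * ι ℝ w = -(ι ℝ w * ι ℝ v) := by
  rw [eq_neg_iff_add_eq_zero]
  exact ι_add_mul_swap v w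

lemma om0_sq : om0 n * om0 n = 0 := by
  rw [om0_eq, Finset.sum_mul_sum]
  have h : ∀ i j : Fin n, ((X i : Pn n) ⊗ₜ[ℝ] ι ℝ (vv n i)) * ((X j : Pn n) ⊗ₜ[ℝ] ι ℝ (vv n j))
      = -(((X j : Pn n) ⊗ₜ[ℝ] ι ℝ (vv n j)) * ((X i : Pn n) ⊗ₜ[ℝ] ι ℝ (vv n i))) := by
    intro i j
    rw [Algebra.TensorProduct.tmul_mul_tmul, Algebra.TensorProduct.tmul_mul_tmul,
      ι_anticomm, mul_comm (X j) (X i), TensorProduct.tmul_neg]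
  have h2 : (∑ i : Fin n, ∑ j : Fin n,
      ((X i : Pn n) ⊗ₜ[ℝ] ι ℝ (vv n i)) * ((X j : Pn n) ⊗ₜ[ℝ] ι ℝ (vv n j)))
      = -∑ i : Fin n, ∑ j : Fin n,
      ((X i : Pn n) ⊗ₜ[ℝ] ι ℝ (vv n i)) * ((X j : Pn n) ⊗ₜ[ℝ] ι ℝ (vv n j)) := by
    conv_lhs => rw [Finset.sum_comm]
    rw [← Finset.sum_neg_distrib]
    refine Finset.sum_congr rfl fun j _ => ?_
    rw [← Finset.sum_neg_distrib]
    exact Finset.sum_congr rfl fun i _ => h i j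
  have h3 := eq_neg_iff_add_eq_zero.mp h2
  have h4 : (2 : ℝ) • (∑ i : Fin n, ∑ j : Fin n,
      ((X i : Pn n) ⊗ₜ[ℝ] ι ℝ (vv n i)) * ((X j : Pn n) ⊗ₜ[ℝ] ι ℝ (vv n j))) = 0 := by
    rw [two_smul]; exact h3
  rcases smul_eq_zero.mp h4 with h | h
  · norm_num at h
  · exact h

lemma Nop_tmul (f : Pn n) (g : En n) :
    Nop n (f ⊗ₜ[ℝ] g) = n • (f ⊗ₜ[ℝ] g) + (∑ i : Fin n, X i * pderiv i f) ⊗ₜ[ℝ] g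
      - f ⊗ₜ[ℝ] (∑ i : Fin n, ι ℝ (vv n i) * ct n i g) := by
  simp only [Nop, LinearMap.sub_apply, LinearMap.add_apply, LinearMap.smul_apply,
    LinearMap.id_apply, TensorProduct.map_tmul, Euler, Kop, LinearMap.sum_apply,
    LinearMap.comp_apply, LinearMap.mulLeft_apply, Derivation.coeFn_coe]

lemma homotopy : dOp n ∘ₗ sOp n + sOp n ∘ₗ dOp n = Nop n := by
  apply TensorProduct.ext'
  intro f g
  simp only [LinearMap.add_apply, LinearMap.comp_apply]
  rw [sOp_tmul, map_sum, dOp_tmul, map_sum, Nop_tmul]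
  have e1 : ∀ j : Fin n, dOp n ((pderiv j f) ⊗ₜ[ℝ] (ct n j g))
      = ∑ i : Fin n, (X i * pderiv j f) ⊗ₜ[ℝ] (ι ℝ (vv n i) * ct n j g) := fun j => dOp_tmul _ _
  have e2 : ∀ i : Fin n, sOp n ((X i * f) ⊗ₜ[ℝ] (ι ℝ (vv n i) * g))
      = ∑ j : Fin n, (pderiv j (X i * f)) ⊗ₜ[ℝ] (ct n j (ι ℝ (vv n i) * g)) := fun i => sOp_tmul _ _
  rw [Finset.sum_congr rfl fun j _ => e1 j, Finset.sum_congr rfl fun i _ => e2 i]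
  have key : ∀ i j : Fin n, (pderiv j (X i * f)) ⊗ₜ[ℝ] (ct n j (ι ℝ (vv n i) * g))
      = (if j = i then (f ⊗ₜ[ℝ] g + (X i * pderiv j f) ⊗ₜ[ℝ] g
          - f ⊗ₜ[ℝ] (ι ℝ (vv n i) * ct n j g)) else 0)
        - (X i * pderiv j f) ⊗ₜ[ℝ] (ι ℝ (vv n i) * ct n j g) := by
    intro i j
    rw [pderiv_mul, pderiv_X, ct_ι_mul]
    by_cases h : j = i
    · subst h
      simp only [if_pos rfl, Pi.single_eq_same, one_mul, one_smul, vv]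
      simp only [add_tmul, TensorProduct.tmul_sub, TensorProduct.tmul_add,
        TensorProduct.tmul_neg, sub_eq_add_neg]
      abel_nf; ac_rfl
    · have h2 : i ≠ j := fun hh => h hh.symm
      simp only [if_neg h, vv, Pi.single_eq_of_ne h2, Pi.single_eq_of_ne h, zero_mul, zero_add,
        zero_smul, zero_sub, TensorProduct.tmul_neg]
  rw [Finset.sum_congr rfl fun i _ => Finset.sum_congr rfl fun j _ => key i j]
  simp only [Finset.sum_sub_distrib]
  rw [Finset.sum_congr rfl fun i (_ : i ∈ Finset.univ) =>
    (Finset.sum_ite_eq' Finset.univ i (fun j => (f ⊗ₜ[ℝ] g + (X i * pderiv j f) ⊗ₜ[ℝ] g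
          - f ⊗ₜ[ℝ] (ι ℝ (vv n i) * ct n j g)))) ]
  simp only [Finset.mem_univ, if_true]
  rw [Finset.sum_comm (s := Finset.univ) (t := Finset.univ)
    (f := fun i j => (X i * pderiv j f) ⊗ₜ[ℝ] (ι ℝ (vv n i) * ct n j g))]
  simp only [Finset.sum_sub_distrib, Finset.sum_add_distrib, Finset.sum_const,
    Finset.card_univ, Fintype.card_fin, TensorProduct.sum_tmul, TensorProduct.tmul_sum]
  abel

lemma dOp_dOp : dOp n ∘ₗ dOp n = 0 := by
  apply LinearMap.ext
  intro x
  simp only [LinearMap.comp_apply, dOp, LinearMap.mulLeft_apply, LinearMap.zero_apply,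
    ← mul_assoc, om0_sq, zero_mul]

lemma Kop_apply (g : En n) : Kop n g = ∑ i : Fin n, ι ℝ (vv n i) * ct n i g := by
  simp only [Kop, LinearMap.sum_apply, LinearMap.comp_apply, LinearMap.mulLeft_apply]

lemma Euler_apply (f : Pn n) : Euler n f = ∑ i : Fin n, X i * pderiv i f := by
  simp only [Euler, LinearMap.sum_apply, LinearMap.comp_apply, LinearMap.mulLeft_apply,
    Derivation.coeFn_coe]

lemma Nop_tmul' (f : Pn n) (g : En n) :
    Nop n (f ⊗ₜ[ℝ] g) = n • (f ⊗ₜ[ℝ] g) + (Euler n f) ⊗ₜ[ℝ] g - f ⊗ₜ[ℝ] (Kop n g) := by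
  rw [Nop_tmul, Euler_apply, Kop_apply]

lemma Kop_ι_mul (v : Fin n → ℝ) (x : En n) :
    Kop n (ι ℝ v * x) = ι ℝ v * x + ι ℝ v * Kop n x := by
  rw [Kop_apply]
  have e : ∀ i : Fin n, ι ℝ (vv n i) * ct n i (ι ℝ v * x)
      = v i • (ι ℝ (vv n i) * x) + ι ℝ v * (ι ℝ (vv n i) * ct n i x) := by
    intro i
    rw [ct_ι_mul, mul_sub, mul_smul_comm, ← mul_assoc, ι_anticomm (vv n i) v, neg_mul, mul_assoc,
      sub_neg_eq_add]
  rw [Finset.sum_congr rfl fun i _ => e i, Finset.sum_add_distrib]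
  congr 1
  · have h1 : ∀ i : Fin n, v i • (ι ℝ (vv n i) * x) = (ι ℝ (v i • vv n i)) * x := by
      intro i; rw [map_smul, smul_mul_assoc]
    rw [Finset.sum_congr rfl fun i _ => h1 i, ← Finset.sum_mul, ← map_sum]
    have h2 : ∀ i : Fin n, v i • vv n i = Pi.single i (v i) := by
      intro i
      rw [vv, ← Pi.single_smul, smul_eq_mul, mul_one]
    rw [Finset.sum_congr rfl fun i _ => h2 i, Finset.univ_sum_single]
  · rw [Kop_apply, Finset.mul_sum]

/-- products of basis generators indexed by a list -/
def eL (n : ℕ) (L : List (Fin n)) : En n := (L.map fun i => ι ℝ (vv n i)).prod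

@[simp] lemma eL_nil : eL n [] = 1 := rfl

@[simp] lemma eL_cons (i : Fin n) (L : List (Fin n)) :
    eL n (i :: L) = ι ℝ (vv n i) * eL n L := by
  rw [eL, List.map_cons, List.prod_cons]; rfl

lemma Kop_one : Kop n 1 = 0 := by
  rw [Kop_apply]
  refine Finset.sum_eq_zero fun i _ => ?_
  rw [ct_one, mul_zero]

lemma Kop_eL (L : List (Fin n)) : Kop n (eL n L) = L.length • eL n L := by
  induction L with
  | nil => simp [Kop_one]
  | cons i L ih =>
    rw [eL_cons, Kop_ι_mul, ih, List.length_cons, mul_smul_comm, succ_nsmul]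
    abel

/-- products of basis generators indexed by a finset, in increasing order -/
def eS (n : ℕ) (S : Finset (Fin n)) : En n := eL n (S.sort (· ≤ ·))

lemma Kop_eS (S : Finset (Fin n)) : Kop n (eS n S) = S.card • eS n S := by
  rw [eS, Kop_eL, Finset.length_sort]

/-- total degree of an exponent vector -/
def degA (a : Fin n →₀ ℕ) : ℕ := ∑ i : Fin n, a i

lemma Euler_monomial (a : Fin n →₀ ℕ) (r : ℝ) :
    Euler n (monomial a r) = (degA a : ℝ) • monomial a r := by
  rw [Euler_apply]
  have e : ∀ i : Fin n, X i * pderiv i (monomial a r) = (a i : ℝ) • monomial a r := by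
    intro i
    rw [pderiv_monomial]
    by_cases h : a i = 0
    · rw [h, Nat.cast_zero, mul_zero, map_zero, mul_zero, zero_smul]
    · have h1 : X (R := ℝ) i = monomial (Finsupp.single i 1) 1 := rfl
      have hidx : Finsupp.single i 1 + (a - Finsupp.single i 1) = a := by
        ext j
        simp only [Finsupp.add_apply, Finsupp.tsub_apply, Finsupp.single_apply]
        split_ifs with hij
        · subst hij; omega
        · omega
      rw [h1, monomial_mul, one_mul, hidx, smul_monomial, smul_eq_mul, mul_comm]
  rw [Finset.sum_congr rfl fun i _ => e i, ← Finset.sum_smul]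
  congr 1
  rw [degA, Nat.cast_sum]

/-- the weight of a bidegree -/
def wt (n : ℕ) (a : Fin n →₀ ℕ) (S : Finset (Fin n)) : ℝ := (n : ℝ) + degA a - S.card

lemma Nop_eigen (a : Fin n →₀ ℕ) (r : ℝ) (S : Finset (Fin n)) :
    Nop n ((monomial a r) ⊗ₜ[ℝ] eS n S) = wt n a S • ((monomial a r) ⊗ₜ[ℝ] eS n S) := by
  rw [Nop_tmul', Euler_monomial, Kop_eS, TensorProduct.tmul_smul,
    ← TensorProduct.smul_tmul', ← Nat.cast_smul_eq_nsmul ℝ n, ← Nat.cast_smul_eq_nsmul ℝ S.card,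
    wt, ← add_smul, ← sub_smul]

lemma eS_empty : eS n (∅ : Finset (Fin n)) = 1 := by
  rw [eS, Finset.sort_empty, eL_nil]

lemma eS_singleton (i : Fin n) : eS n {i} = ι ℝ (vv n i) := by
  rw [eS, Finset.sort_singleton, eL_cons, eL_nil, mul_one]

lemma eS_insert (i : Fin n) (S : Finset (Fin n)) (h1 : ∀ b ∈ S, i ≤ b) (h2 : i ∉ S) :
    eS n (insert i S) = ι ℝ (vv n i) * eS n S := by
  have hs := Finset.sort_insert (r := (· ≤ ·)) h1 h2
  rw [eS, hs, eL_cons, eS]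

/-- the span of all ordered basis products -/
def MM (n : ℕ) : Submodule ℝ (En n) := Submodule.span ℝ (Set.range (eS n))

lemma mul_eS_strong (S : Finset (Fin n)) : ∀ (i : Fin n),
    ι ℝ (vv n i) * eS n S ∈ Submodule.span ℝ (eS n '' {U | U ⊆ insert i S}) := by
  induction S using Finset.strongInduction with
  | _ S ih =>
    intro i
    rcases S.eq_empty_or_nonempty with rfl | hS
    · rw [eS_empty, mul_one, ← eS_singleton]
      exact Submodule.subset_span ⟨{i}, by simp, rfl⟩
    · set j := S.min' hS with hj
      have hjS : j ∈ S := S.min'_mem hS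
      have hES : eS n S = ι ℝ (vv n j) * eS n (S.erase j) := by
        rw [← eS_insert j (S.erase j) (fun b hb => S.min'_le b (Finset.mem_of_mem_erase hb))
          (Finset.notMem_erase j S), Finset.insert_erase hjS]
      rcases lt_trichotomy i j with hij | hij | hij
      · have h1 : ∀ b ∈ S, i ≤ b := fun b hb => le_of_lt (lt_of_lt_of_le hij (S.min'_le b hb))
        have h2 : i ∉ S := fun hi => absurd (S.min'_le i hi) (not_le.mpr hij)
        rw [← eS_insert i S h1 h2]
        exact Submodule.subset_span ⟨insert i S, by simp, rfl⟩
      · subst hij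
        rw [hES, ← mul_assoc, ι_sq_zero, zero_mul]
        exact Submodule.zero_mem _
      · -- i > j
        have hne : i ≠ j := ne_of_gt hij
        have hmem := ih (S.erase j) (Finset.erase_ssubset hjS) i
        have key : ∀ U ∈ {U | U ⊆ insert i (S.erase j)},
            ι ℝ (vv n j) * eS n U ∈ Submodule.span ℝ (eS n '' {U | U ⊆ insert i S}) := by
          intro U hU
          have hjU : j ∉ U := by
            intro hjU
            rcases Finset.mem_insert.mp (hU hjU) with h | h
            · exact hne h.symm
            · exact Finset.notMem_erase j S h
          have hle : ∀ b ∈ U, j ≤ b := by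
            intro b hb
            rcases Finset.mem_insert.mp (hU hb) with h | h
            · exact h ▸ le_of_lt hij
            · exact S.min'_le b (Finset.mem_of_mem_erase h)
          rw [← eS_insert j U hle hjU]
          refine Submodule.subset_span ⟨insert j U, ?_, rfl⟩
          intro b hb
          rcases Finset.mem_insert.mp hb with h | h
          · exact h ▸ Finset.mem_insert_of_mem hjS
          · rcases Finset.mem_insert.mp (hU h) with h' | h'
            · exact h' ▸ Finset.mem_insert_self i S
            · exact Finset.mem_insert_of_mem (Finset.mem_of_mem_erase h')
        have hmul : ι ℝ (vv n j) * (ι ℝ (vv n i) * eS n (S.erase j))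
            ∈ Submodule.span ℝ (eS n '' {U | U ⊆ insert i S}) := by
          refine Submodule.span_induction ?_ ?_ ?_ ?_ hmem
          · rintro x ⟨U, hU, rfl⟩
            exact key U hU
          · rw [mul_zero]; exact Submodule.zero_mem _
          · intro x y _ _ hx hy
            rw [mul_add]; exact Submodule.add_mem _ hx hy
          · intro r x _ hx
            rw [mul_smul_comm]; exact Submodule.smul_mem _ r hx
        rw [hES, ← mul_assoc, ι_anticomm (vv n i) (vv n j), neg_mul, mul_assoc]
        exact Submodule.neg_mem _ hmul

lemma mul_eS_mem (i : Fin n) (S : Finset (Fin n)) : ι ℝ (vv n i) * eS n S ∈ MM n :=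
  Submodule.span_mono (Set.image_subset_range _ _) (mul_eS_strong S i)

lemma ι_mem (v : Fin n → ℝ) : ι ℝ v ∈ MM n := by
  have hv : v = ∑ i : Fin n, v i • vv n i := by
    have h2 : ∀ i : Fin n, v i • vv n i = Pi.single i (v i) := by
      intro i; rw [vv, ← Pi.single_smul, smul_eq_mul, mul_one]
    rw [Finset.sum_congr rfl fun i _ => h2 i, Finset.univ_sum_single]
  rw [hv, map_sum]
  refine Submodule.sum_mem _ fun i _ => ?_
  rw [map_smul]
  refine Submodule.smul_mem _ _ ?_
  rw [← eS_singleton]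
  exact Submodule.subset_span ⟨{i}, rfl⟩

lemma mul_mem_MM (v : Fin n → ℝ) (x : En n) (hx : x ∈ MM n) : ι ℝ v * x ∈ MM n := by
  have hv : ∀ y : En n, ι ℝ v * y = ∑ i : Fin n, v i • (ι ℝ (vv n i) * y) := by
    intro y
    have hv2 : v = ∑ i : Fin n, v i • vv n i := by
      have h2 : ∀ i : Fin n, v i • vv n i = Pi.single i (v i) := by
        intro i; rw [vv, ← Pi.single_smul, smul_eq_mul, mul_one]
      rw [Finset.sum_congr rfl fun i _ => h2 i, Finset.univ_sum_single]
    conv_lhs => rw [hv2]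
    rw [map_sum, Finset.sum_mul]
    exact Finset.sum_congr rfl fun i _ => by rw [map_smul, smul_mul_assoc]
  rw [hv]
  refine Submodule.sum_mem _ fun i _ => ?_
  refine Submodule.smul_mem _ _ ?_
  refine Submodule.span_induction ?_ ?_ ?_ ?_ hx
  · rintro y ⟨S, rfl⟩
    exact mul_eS_mem i S
  · rw [mul_zero]; exact Submodule.zero_mem _
  · intro a b _ _ ha hb
    rw [mul_add]; exact Submodule.add_mem _ ha hb
  · intro r a _ ha
    rw [mul_smul_comm]; exact Submodule.smul_mem _ r ha

lemma MM_top (x : En n) : x ∈ MM n := by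
  have H : x ∈ MM n ∧ ∀ y ∈ MM n, x * y ∈ MM n := by
    induction x using CliffordAlgebra.induction with
    | algebraMap r =>
      constructor
      · rw [Algebra.algebraMap_eq_smul_one, ← eS_empty]
        exact Submodule.smul_mem _ r (Submodule.subset_span ⟨∅, rfl⟩)
      · intro y hy
        rw [Algebra.algebraMap_eq_smul_one, smul_mul_assoc, one_mul]
        exact Submodule.smul_mem _ r hy
    | ι v =>
      exact ⟨ι_mem v, fun y hy => mul_mem_MM v y hy⟩
    | mul a b ha hb =>
      constructor
      · rw [show a * b = a * (b * 1) by rw [mul_one]]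
        rw [mul_one]
        exact ha.2 b hb.1
      · intro y hy
        rw [mul_assoc]
        exact ha.2 _ (hb.2 y hy)
    | add a b ha hb =>
      exact ⟨Submodule.add_mem _ ha.1 hb.1, fun y hy => by
        rw [add_mul]; exact Submodule.add_mem _ (ha.2 y hy) (hb.2 y hy)⟩
  exact H.1

lemma eVol_eq : eVol n = (1 : Pn n) ⊗ₜ[ℝ] eS n Finset.univ := by
  have h0 : ∀ L : List (Fin n),
      ((L.map fun i => ((1 : Pn n) ⊗ₜ[ℝ] ι ℝ (vv n i) : Bmodel n))).prod
        = (1 : Pn n) ⊗ₜ[ℝ] eL n L := by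
    intro L
    induction L with
    | nil => simp only [List.map_nil, List.prod_nil, eL_nil, Algebra.TensorProduct.one_def]
    | cons i L ih =>
      rw [List.map_cons, List.prod_cons, ih, eL_cons, Algebra.TensorProduct.tmul_mul_tmul,
        one_mul]
  have h1 : List.ofFn (ee n) = (List.finRange n).map fun i => ((1 : Pn n) ⊗ₜ[ℝ] ι ℝ (vv n i)) := by
    rw [List.ofFn_eq_map]
    exact List.map_congr_left fun i _ => rfl
  rw [eVol, h1, h0, eS, Fin.sort_univ]

/-- the span of weight-k bihomogeneous monomials -/
def Vp (n : ℕ) (k : ℝ) : Submodule ℝ (Bmodel n) :=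
  Submodule.span ℝ {x | ∃ a S, wt n a S = k ∧ x = (monomial a (1:ℝ)) ⊗ₜ[ℝ] eS n S}

lemma Vp_le_eigenspace (k : ℝ) : Vp n k ≤ Module.End.eigenspace (Nop n) k := by
  refine Submodule.span_le.mpr ?_
  rintro x ⟨a, S, hw, rfl⟩
  rw [SetLike.mem_coe, Module.End.mem_eigenspace_iff, Nop_eigen, hw]

lemma mem_iSup_Vp (z : Bmodel n) : z ∈ ⨆ k : ℝ, Vp n k := by
  induction z using TensorProduct.induction_on with
  | zero => exact Submodule.zero_mem _
  | add a b ha hb => exact Submodule.add_mem _ ha hb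
  | tmul f g =>
    have hg : g ∈ MM n := MM_top g
    -- first reduce g
    have hred : ∀ S : Finset (Fin n), f ⊗ₜ[ℝ] eS n S ∈ ⨆ k : ℝ, Vp n k := by
      intro S
      rw [f.as_sum, TensorProduct.sum_tmul]
      refine Submodule.sum_mem _ fun a ha => ?_
      have : (monomial a (coeff a f)) ⊗ₜ[ℝ] eS n S
          = coeff a f • ((monomial a (1:ℝ)) ⊗ₜ[ℝ] eS n S) := by
        rw [TensorProduct.smul_tmul', smul_monomial, smul_eq_mul, mul_one]
      rw [this]
      refine Submodule.smul_mem _ _ ?_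
      refine Submodule.mem_iSup_of_mem (wt n a S) ?_
      exact Submodule.subset_span ⟨a, S, rfl, rfl⟩
    refine Submodule.span_induction ?_ ?_ ?_ ?_ hg
    · rintro y ⟨S, rfl⟩
      exact hred S
    · rw [TensorProduct.tmul_zero]; exact Submodule.zero_mem _
    · intro x y _ _ hx hy
      rw [TensorProduct.tmul_add]; exact Submodule.add_mem _ hx hy
    · intro r x _ hx
      rw [TensorProduct.tmul_smul]; exact Submodule.smul_mem _ r hx

lemma Vp_zero_le (hn : 1 ≤ n) : Vp n 0 ≤ Submodule.span ℝ {eVol n} := by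
  refine Submodule.span_le.mpr ?_
  rintro x ⟨a, S, hw, rfl⟩
  have hcard : S.card ≤ n := le_of_le_of_eq (Finset.card_le_univ S) (by simp)
  have hdeg : (0:ℝ) ≤ (degA a : ℝ) := Nat.cast_nonneg _
  rw [wt] at hw
  have hcast : (S.card : ℝ) = ((n + degA a : ℕ) : ℝ) := by push_cast; linarith
  have hnat : S.card = n + degA a := Nat.cast_injective hcast
  have ha : a = 0 := by
    ext i
    have hz : degA a = 0 := by omega
    rw [degA] at hz
    exact Finset.sum_eq_zero_iff.mp hz i (Finset.mem_univ i)
  have hSu : S = Finset.univ := by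
    apply Finset.eq_univ_of_card
    simpa using (by omega : S.card = n)
  subst ha hSu
  rw [monomial_zero', map_one, ← eVol_eq]
  exact Submodule.subset_span rfl

lemma eig_comp_zero (F : ℝ →₀ Bmodel n)
    (hF : ∀ k, F k ∈ Module.End.eigenspace (Nop n) k)
    (hsum : (F.sum fun _ x => x) = 0) : ∀ k, F k = 0 := by
  intro k
  by_cases hk : k ∈ F.support
  swap
  · exact Finsupp.notMem_support_iff.mp hk
  have hindep := Module.End.eigenspaces_iSupIndep (Nop n) k
  have hmem2 : F k ∈ ⨆ (j) (_ : j ≠ k), Module.End.eigenspace (Nop n) j := by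
    have h2 : ∑ j ∈ F.support, F j = 0 := hsum
    rw [← Finset.add_sum_erase _ _ hk] at h2
    have h3 : F k = - ∑ j ∈ F.support.erase k, F j := eq_neg_of_add_eq_zero_left h2
    rw [h3]
    refine Submodule.neg_mem _ (Submodule.sum_mem _ fun j hj => ?_)
    exact Submodule.mem_iSup_of_mem j
      (Submodule.mem_iSup_of_mem (Finset.ne_of_mem_erase hj) (hF j))
  exact Submodule.disjoint_def.mp hindep (F k) (hF k) hmem2

lemma dOp_mem_eigenspace {k : ℝ} {x : Bmodel n}
    (hx : x ∈ Module.End.eigenspace (Nop n) k) :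
    dOp n x ∈ Module.End.eigenspace (Nop n) k := by
  rw [Module.End.mem_eigenspace_iff] at hx ⊢
  have h1 := LinearMap.congr_fun (homotopy (n := n)) (dOp n x)
  have h2 := LinearMap.congr_fun (homotopy (n := n)) x
  have hdd : ∀ y : Bmodel n, dOp n (dOp n y) = 0 := fun y =>
    LinearMap.congr_fun (dOp_dOp (n := n)) y
  simp only [LinearMap.add_apply, LinearMap.comp_apply] at h1 h2
  rw [hx] at h2
  have h3 := congrArg (dOp n) h2
  rw [map_add, hdd, zero_add, map_smul] at h3
  rw [hdd, map_zero, add_zero] at h1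
  rw [← h1, h3]

lemma exact_of_eigen_nonzero {k : ℝ} {x : Bmodel n} (hk : k ≠ 0)
    (hx : x ∈ Module.End.eigenspace (Nop n) k) (hdx : dOp n x = 0) :
    x = dOp n (k⁻¹ • sOp n x) := by
  rw [Module.End.mem_eigenspace_iff] at hx
  have h2 := LinearMap.congr_fun (homotopy (n := n)) x
  simp only [LinearMap.add_apply, LinearMap.comp_apply] at h2
  rw [hdx, map_zero, add_zero, hx] at h2
  rw [map_smul, h2, smul_smul, inv_mul_cancel₀ hk, one_smul]

/-- the top-degree coefficient functional on the exterior algebra -/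
def Tn (n : ℕ) : En n →ₗ[ℝ] ℝ :=
  liftAlternating (Function.update
    (fun i : ℕ => (0 : (Fin n → ℝ) [⋀^Fin i]→ₗ[ℝ] ℝ)) n ((Pi.basisFun ℝ (Fin n)).det))

lemma Tn_eS_univ : Tn n (eS n Finset.univ) = 1 := by
  have h1 : eS n Finset.univ = ιMulti ℝ n (fun i => vv n i) := by
    rw [ιMulti_apply, eS, Fin.sort_univ, eL, List.ofFn_eq_map]
  rw [Tn, h1, liftAlternating_apply_ιMulti, Function.update_self]
  have h2 : (fun i => vv n i) = ⇑(Pi.basisFun ℝ (Fin n)) := by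
    funext i
    rw [Pi.basisFun_apply, vv]
  rw [h2, Module.Basis.det_self]

/-- evaluation at 0 -/
def ev0 (n : ℕ) : Pn n →ₗ[ℝ] ℝ := (aeval (fun _ : Fin n => (0:ℝ))).toLinearMap

/-- the cohomological pairing functional -/
def phi (n : ℕ) : Bmodel n →ₗ[ℝ] ℝ :=
  (TensorProduct.lid ℝ ℝ).toLinearMap ∘ₗ TensorProduct.map (ev0 n) (Tn n)

lemma phi_tmul (f : Pn n) (g : En n) : phi n (f ⊗ₜ[ℝ] g) = ev0 n f * Tn n g := by
  simp only [phi, LinearMap.comp_apply, TensorProduct.map_tmul, LinearEquiv.coe_toLinearMap,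
    TensorProduct.lid_tmul, smul_eq_mul]

lemma phi_eVol : phi n (eVol n) = 1 := by
  rw [eVol_eq, phi_tmul, Tn_eS_univ, mul_one, ev0]
  simp

lemma phi_dOp (b : Bmodel n) : phi n (dOp n b) = 0 := by
  induction b using TensorProduct.induction_on with
  | zero => rw [map_zero, map_zero]
  | add x y hx hy => rw [map_add, map_add, hx, hy, add_zero]
  | tmul f g =>
    rw [dOp_tmul, map_sum]
    refine Finset.sum_eq_zero fun i _ => ?_
    rw [phi_tmul]
    have : ev0 n (X i * f) = 0 := by
      rw [ev0, AlgHom.toLinearMap_apply, map_mul, aeval_X]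
      simp
    rw [this, zero_mul]

theorem berezinian_main (n : ℕ) (hn : 1 ≤ n) :
    om0 n * om0 n = 0 ∧
      (∀ α : Bmodel n, om0 n * α = 0 →
        ∃ (c : ℝ) (β : Bmodel n), α = c • eVol n + om0 n * β) ∧
      ∀ (c : ℝ) (β' : Bmodel n), c • eVol n = om0 n * β' → c = 0 := by
  refine ⟨om0_sq, ?_, ?_⟩
  · intro α hα
    have hdα : dOp n α = 0 := hα
    obtain ⟨F, hF, hsum⟩ := (Submodule.mem_iSup_iff_exists_finsupp (Vp n) α).mp (mem_iSup_Vp α)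
    have hFe : ∀ k, F k ∈ Module.End.eigenspace (Nop n) k := fun k =>
      Vp_le_eigenspace k (hF k)
    -- each dOp (F k) = 0
    have hdF : ∀ k, dOp n (F k) = 0 := by
      have hG : ∀ k, (F.mapRange (fun x => dOp n x) (map_zero _)) k
          ∈ Module.End.eigenspace (Nop n) k := by
        intro k
        rw [Finsupp.mapRange_apply]
        exact dOp_mem_eigenspace (hFe k)
      have hGsum : ((F.mapRange (fun x => dOp n x) (map_zero _)).sum fun _ x => x) = 0 := by
        rw [Finsupp.sum_mapRange_index (fun _ => rfl)]
        rw [show (F.sum fun _ x => dOp n x) = dOp n (F.sum fun _ x => x) from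
          (map_finsuppSum (dOp n) F _).symm, hsum, hdα]
      have := eig_comp_zero _ hG hGsum
      intro k
      have hk := this k
      rwa [Finsupp.mapRange_apply] at hk
    obtain ⟨c, hc⟩ := Submodule.mem_span_singleton.mp (Vp_zero_le hn (hF 0))
    refine ⟨c, ∑ k ∈ F.support.erase 0, k⁻¹ • sOp n (F k), ?_⟩
    have hβ : om0 n * (∑ k ∈ F.support.erase 0, k⁻¹ • sOp n (F k))
        = ∑ k ∈ F.support.erase 0, F k := by
      have : om0 n * (∑ k ∈ F.support.erase 0, k⁻¹ • sOp n (F k))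
          = dOp n (∑ k ∈ F.support.erase 0, k⁻¹ • sOp n (F k)) := rfl
      rw [this, map_sum]
      refine Finset.sum_congr rfl fun k hk => ?_
      exact (exact_of_eigen_nonzero (Finset.ne_of_mem_erase hk) (hFe k) (hdF k)).symm
    rw [hβ, hc]
    have hsplit : α = F 0 + ∑ k ∈ F.support.erase 0, F k := by
      rw [← hsum]
      by_cases h0 : 0 ∈ F.support
      · exact (Finset.add_sum_erase _ _ h0).symm
      · rw [Finsupp.notMem_support_iff.mp h0, zero_add, Finset.erase_eq_of_notMem h0]
        rfl
    exact hsplit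
  · intro c β' h
    have h1 := congrArg (phi n) h
    rw [map_smul, phi_eVol, smul_eq_mul, mul_one] at h1
    have h2 : phi n (om0 n * β') = 0 := phi_dOp β'
    rw [h2] at h1
    exact h1

end Ber

/-- Manin's cohomological Berezinian is one-dimensional: `ω₀ * ω₀ = 0`, every
`ω₀∧`-closed `α ∈ B` is `c • (e_1 * ⋯ * e_n) + ω₀ * β`, and `c • (e_1 * ⋯ * e_n)` is
`ω₀∧`-exact only for `c = 0`. -/
theorem berezinian_one_dimensional (n : ℕ) (hn : 1 ≤ n) :
    om0 n * om0 n = 0 ∧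
      (∀ α : Bmodel n, om0 n * α = 0 →
        ∃ (c : ℝ) (β : Bmodel n), α = c • eVol n + om0 n * β) ∧
      ∀ (c : ℝ) (β' : Bmodel n), c • eVol n = om0 n * β' → c = 0 := by
  exact Ber.berezinian_main n hn
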